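/- Let T be a monotonically ω-monolithic space of countable tightness. Then T is monotonically monolithic. -/

import Mathlib

open Set Cardinal

universe u

/-- `N` is an external network of `S` in `T`. -/
def IsExternalNetwork (T : Type u) [TopologicalSpace T] (N : Set (Set T)) (S : Set T) : Prop :=
  ∀ a ∈ S, ∀ U : Set T, IsOpen U → a ∈ U → ∃ P ∈ N, a ∈ P ∧ P ⊆ U

/-- `T` is monotonically Sokolov: to each countable family of closed sets one can assign
a continuous retraction keeping each member of the family invariant, together with a
countable external network of the image of the retraction, ω-monotonically. -/
def MonotonicallySokolov (T : Type u) [TopologicalSpace T] : Prop :=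
  ∃ (r : Set (Set T) → T → T) (N : Set (Set T) → Set (Set T)),
    (∀ F : Set (Set T), F.Countable → (∀ A ∈ F, IsClosed A) →
      Continuous (r F) ∧ (∀ x, r F (r F x) = r F x) ∧
      (∀ A ∈ F, ∀ x ∈ A, r F x ∈ A) ∧
      (N F).Countable ∧ IsExternalNetwork T (N F) (Set.range (r F))) ∧
    (∀ F G : Set (Set T), F.Countable → (∀ A ∈ F, IsClosed A) →
      G.Countable → (∀ A ∈ G, IsClosed A) → F ⊆ G → N F ⊆ N G) ∧
    (∀ s : ℕ → Set (Set T), (∀ n, (s n).Countable) → (∀ n, ∀ A ∈ s n, IsClosed A) →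
      (∀ n, s n ⊆ s (n + 1)) → N (⋃ n, s n) = ⋃ n, N (s n))

/-- `T` is monotonically ω-monolithic: to each countable set one can assign a countable
external network of its closure, ω-monotonically. -/
def MonotonicallyOmegaMonolithic (T : Type u) [TopologicalSpace T] : Prop :=
  ∃ O : Set T → Set (Set T),
    (∀ A : Set T, A.Countable → (O A).Countable ∧ IsExternalNetwork T (O A) (closure A)) ∧
    (∀ A B : Set T, A.Countable → B.Countable → A ⊆ B → O A ⊆ O B) ∧
    (∀ s : ℕ → Set T, (∀ n, (s n).Countable) → (∀ n, s n ⊆ s (n + 1)) →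
      O (⋃ n, s n) = ⋃ n, O (s n))

/-- `T` is monotonically `κ`-monolithic. -/
def MonotonicallyKappaMonolithic (T : Type u) [TopologicalSpace T] (κ : Cardinal.{u}) : Prop :=
  ∃ O : Set T → Set (Set T),
    (∀ A : Set T, #A ≤ κ →
      #(O A) ≤ #A + ℵ₀ ∧ IsExternalNetwork T (O A) (closure A)) ∧
    (∀ A B : Set T, #A ≤ κ → #B ≤ κ → A ⊆ B → O A ⊆ O B) ∧
    (∀ (ι : Type u) [LinearOrder ι], #ι ≤ κ →
      ∀ A : ι → Set T, Monotone A → (∀ i, #(A i) ≤ κ) →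
        O (⋃ i, A i) = ⋃ i, O (A i))

/-- `T` is monotonically monolithic: monotonically `κ`-monolithic for every infinite `κ`. -/
def MonotonicallyMonolithic (T : Type u) [TopologicalSpace T] : Prop :=
  ∀ κ : Cardinal.{u}, ℵ₀ ≤ κ → MonotonicallyKappaMonolithic T κ

/-- `T` is a Collins-Roscoe space. -/
def CollinsRoscoe (T : Type u) [TopologicalSpace T] : Prop :=
  ∃ O : T → Set (Set T), (∀ x, (O x).Countable) ∧
    ∀ A : Set T, IsExternalNetwork T (⋃ x ∈ A, O x) (closure A)

/-- The derived network operator: union of `O` over nonempty finite "lists" inside `A`. -/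
def netOp {T : Type u} (O : Set T → Set (Set T)) (A : Set T) : Set (Set T) :=
  ⋃ l ∈ {l : List T | l ≠ [] ∧ ∀ x ∈ l, x ∈ A}, O {x | x ∈ l}

lemma netOp_mono {T : Type u} (O : Set T → Set (Set T)) {A B : Set T} (hAB : A ⊆ B) :
    netOp O A ⊆ netOp O B := by
  refine Set.iUnion₂_subset fun l hl => ?_
  exact Set.subset_iUnion₂ (s := fun l _ => O {x | x ∈ l}) l ⟨hl.1, fun x hx => hAB (hl.2 x hx)⟩

lemma mem_netOp {T : Type u} (O : Set T → Set (Set T)) {A : Set T} {l : List T}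
    (hne : l ≠ []) (hl : ∀ x ∈ l, x ∈ A) :
    O {x | x ∈ l} ⊆ netOp O A :=
  Set.subset_iUnion₂ (s := fun l _ => O {x | x ∈ l}) l ⟨hne, hl⟩

/-- Using the ω-chain property, `O B ⊆ netOp O B` for countable nonempty `B`. -/
lemma o_subset_netOp {T : Type u} (O : Set T → Set (Set T))
    (hO3 : ∀ s : ℕ → Set T, (∀ n, (s n).Countable) → (∀ n, s n ⊆ s (n + 1)) →
      O (⋃ n, s n) = ⋃ n, O (s n))
    {B : Set T} (hBc : B.Countable) (hBne : B.Nonempty) :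
    O B ⊆ netOp O B := by
  obtain ⟨f, rfl⟩ := hBc.exists_eq_range hBne
  set s : ℕ → Set T := fun n => {x | x ∈ (List.range (n + 1)).map f} with hs
  have hsc : ∀ n, (s n).Countable := fun n => (List.finite_toSet _).countable
  have hsmono : ∀ n, s n ⊆ s (n + 1) := by
    intro n x hx
    simp only [hs, mem_setOf_eq, List.mem_map, List.mem_range] at hx ⊢
    obtain ⟨k, hk, rfl⟩ := hx
    exact ⟨k, by omega, rfl⟩
  have hsu : (⋃ n, s n) = Set.range f := by
    ext x
    simp only [mem_iUnion, hs, mem_setOf_eq, List.mem_map, List.mem_range, Set.mem_range]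
    constructor
    · rintro ⟨n, k, _, rfl⟩; exact ⟨k, rfl⟩
    · rintro ⟨k, rfl⟩; exact ⟨k, k, by omega, rfl⟩
  rw [← hsu, hO3 s hsc hsmono]
  refine Set.iUnion_subset fun n => ?_
  have : O (s n) ⊆ netOp O (s n) := by
    refine mem_netOp O (l := (List.range (n + 1)).map f) ?_ ?_
    · simp [List.range_succ]
    · intro x hx; exact hx
  exact this.trans (netOp_mono O (Set.subset_iUnion s n))

theorem monotonicallyMonolithic_of_omegaMonolithic_countableTightness
    (T : Type u) [TopologicalSpace T]
    (ht : ∀ A : Set T, ∀ x ∈ closure A, ∃ B ⊆ A, B.Countable ∧ x ∈ closure B)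
    (h : MonotonicallyOmegaMonolithic T) :
    MonotonicallyMonolithic T := by
  obtain ⟨O, hO1, _hO2, hO3⟩ := h
  intro κ _hκ
  refine ⟨netOp O, ?_, ?_, ?_⟩
  · intro A _hA
    constructor
    · -- cardinality bound
      have hcard : #(netOp O A) ≤
          #({l : List T | l ≠ [] ∧ ∀ x ∈ l, x ∈ A}) * ⨆ l : {l : List T | l ≠ [] ∧ ∀ x ∈ l, x ∈ A}, #(O {x | x ∈ (l : List T)}) :=
        Cardinal.mk_biUnion_le _ _
      have hset : #({l : List T | l ≠ [] ∧ ∀ x ∈ l, x ∈ A}) ≤ #A + ℵ₀ := by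
        have hsub : {l : List T | l ≠ [] ∧ ∀ x ∈ l, x ∈ A} ⊆
            Set.range (List.map (Subtype.val : A → T)) := by
          rintro l ⟨-, hl⟩
          refine ⟨l.pmap (fun x hx => (⟨x, hx⟩ : A)) hl, ?_⟩
          rw [List.map_pmap]
          exact List.pmap_eq_map _ |>.trans (List.map_id l)
        calc #({l : List T | l ≠ [] ∧ ∀ x ∈ l, x ∈ A})
            ≤ #(Set.range (List.map (Subtype.val : A → T))) := mk_le_mk_of_subset hsub
          _ ≤ #(List A) := mk_range_le
          _ ≤ max ℵ₀ #A := Cardinal.mk_list_le_max _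
          _ = #A + ℵ₀ := by rw [Cardinal.add_eq_max' le_rfl, max_comm]
      have hsup : (⨆ l : {l : List T | l ≠ [] ∧ ∀ x ∈ l, x ∈ A}, #(O {x | x ∈ (l : List T)})) ≤ ℵ₀ := by
        refine ciSup_le' fun l => ?_
        have : (O {x | x ∈ (l : List T)}).Countable :=
          (hO1 _ (List.finite_toSet _).countable).1
        exact (Set.countable_coe_iff.mp (by exact this)).le_aleph0
      calc #(netOp O A) ≤ _ := hcard
        _ ≤ (#A + ℵ₀) * ℵ₀ := mul_le_mul' hset hsup
        _ = #A + ℵ₀ := by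
            rw [Cardinal.mul_eq_max (le_add_self) le_rfl]
            exact max_eq_left (le_add_self)
    · -- external network
      intro x hx U hU hxU
      obtain ⟨B, hBA, hBc, hxB⟩ := ht A x hx
      have hBne : B.Nonempty := by
        rcases B.eq_empty_or_nonempty with rfl | hne
        · simp at hxB
        · exact hne
      obtain ⟨P, hP, hxP, hPU⟩ := (hO1 B hBc).2 x hxB U hU hxU
      exact ⟨P, netOp_mono O hBA (o_subset_netOp O hO3 hBc hBne hP), hxP, hPU⟩
  · intro A B _ _ hAB
    exact netOp_mono O hAB
  · intro ι _ _hι A hA _hAκ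
    apply Set.Subset.antisymm
    · refine Set.iUnion₂_subset fun l hl => ?_
      obtain ⟨hne, hmem⟩ := hl
      have key : ∀ (l : List T), l ≠ [] → (∀ x ∈ l, x ∈ ⋃ i, A i) → ∃ i, ∀ x ∈ l, x ∈ A i := by
        intro l
        induction l with
        | nil => intro hne; exact absurd rfl hne
        | cons a t ih =>
          intro _ hmem
          obtain ⟨i₀, hi₀⟩ := Set.mem_iUnion.mp (hmem a List.mem_cons_self)
          rcases eq_or_ne t [] with rfl | htne
          · exact ⟨i₀, by simpa using hi₀⟩
          · obtain ⟨i₁, hi₁⟩ := ih htne fun x hx => hmem x (List.mem_cons_of_mem a hx)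
            refine ⟨max i₀ i₁, fun x hx => ?_⟩
            rcases List.mem_cons.mp hx with rfl | hx
            · exact hA (le_max_left _ _) hi₀
            · exact hA (le_max_right _ _) (hi₁ x hx)
      obtain ⟨i, hi⟩ := key l hne hmem
      exact (mem_netOp O hne hi).trans (Set.subset_iUnion (fun i => netOp O (A i)) i)
    · exact Set.iUnion_subset fun i => netOp_mono O (Set.subset_iUnion A i)
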